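/- If a, b are lifts of orientation-preserving circle homeomorphisms with rot~(a) = p/q (reduced) and rot~(b) = p'/q, then rot~([a,b]) ≤ 1/q, where [a,b] = aba⁻¹b⁻¹. Moreover if for some point x of a periodic orbit of a the commutator moves x strictly left, then rot~([a,b]) ≤ 0. -/

import Mathlib

open CircleDeg1Lift

/-- The translation number of a lift of an orientation-preserving circle homeomorphism. -/
noncomputable def rotZ (f : CircleDeg1Liftˣ) : ℝ :=
  (f : CircleDeg1Lift).translationNumber

private lemma rotz_shiftIter (Φ : ℤ → ℤ) (d : ℤ) (h : ∀ n, Φ (n + d) = Φ n + d) :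
    ∀ (t : ℤ) (n : ℤ), Φ (n + t * d) = Φ n + t * d := by
  intro t
  induction t using Int.induction_on with
  | zero => simp
  | succ k ih =>
      intro n
      have h1 : n + ((k : ℤ) + 1) * d = (n + k * d) + d := by ring
      rw [h1, h (n + k * d), ih n]; ring
  | pred k ih =>
      intro n
      have h1 : (n + (-(k : ℤ) - 1) * d) + d = n + (-(k : ℤ)) * d := by ring
      have h2 := h (n + (-(k : ℤ) - 1) * d)
      rw [h1, ih n] at h2
      have h3 : (-(k : ℤ) - 1) * d = (-(k : ℤ)) * d - d := by ring
      omega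

private lemma rotz_stepIter (Φ : ℤ → ℤ) (d : ℤ) (h : ∀ n, Φ (n + d) ≤ Φ n + d) :
    ∀ (j : ℕ) (n : ℤ), Φ (n + (j : ℤ) * d) ≤ Φ n + (j : ℤ) * d := by
  intro j
  induction j with
  | zero => simp
  | succ k ih =>
      intro n
      have h1 : n + ((k : ℤ) + 1) * d = (n + k * d) + d := by ring
      have hc : ((k + 1 : ℕ) : ℤ) = (k : ℤ) + 1 := by push_cast; ring
      rw [hc, h1]
      calc Φ ((n + k * d) + d) ≤ Φ (n + k * d) + d := h _
        _ ≤ Φ n + (k : ℤ) * d + d := by have := ih n; omega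
        _ = Φ n + ((k : ℤ) + 1) * d := by ring

private lemma rotz_phiEq (Φ : ℤ → ℤ) (p : ℤ) (q : ℕ) (hq : 0 < q)
    (hcop : IsCoprime p (q : ℤ))
    (hq' : ∀ n, Φ (n + (q : ℤ)) = Φ n + (q : ℤ))
    (hp' : ∀ n, Φ (n + p) ≤ Φ n + p) :
    ∀ n, Φ n = n + Φ 0 := by
  have hqt := rotz_shiftIter Φ (q : ℤ) hq'
  have hpj := rotz_stepIter Φ p hp'
  have hpe : ∀ n, Φ (n + p) = Φ n + p := by
    intro n
    refine le_antisymm (hp' n) ?_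
    have h1 : Φ (n + p * (q : ℤ)) = Φ n + p * (q : ℤ) := hqt p n
    have h2 := hpj (q - 1) (n + p)
    have hc : ((q - 1 : ℕ) : ℤ) = (q : ℤ) - 1 := by
      have : (1 : ℕ) ≤ q := hq
      push_cast [Nat.cast_sub this]
      ring
    rw [hc] at h2
    have h3 : (n + p) + ((q : ℤ) - 1) * p = n + p * (q : ℤ) := by ring
    rw [h3, h1] at h2
    have h4 : ((q : ℤ) - 1) * p = p * (q : ℤ) - p := by ring
    omega
  have hpt := rotz_shiftIter Φ p hpe
  intro n
  obtain ⟨a, b, hab⟩ := hcop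
  have e1 : Φ (0 + (n * a) * p) = Φ 0 + (n * a) * p := hpt (n * a) 0
  have e2 : Φ ((0 + (n * a) * p) + (n * b) * (q : ℤ)) = Φ (0 + (n * a) * p) + (n * b) * (q : ℤ) :=
    hqt (n * b) _
  have key : (0 + (n * a) * p) + (n * b) * (q : ℤ) = n := by linear_combination n * hab
  rw [key, e1] at e2
  have : (n * a) * p + (n * b) * (q : ℤ) = n := by linear_combination n * hab
  omega

private lemma rotz_exists_enum (f : CircleDeg1Liftˣ) (p : ℤ) (q : ℕ) (hq : 0 < q)
    (hred : Nat.Coprime p.natAbs q)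
    (hf : (f : CircleDeg1Lift).translationNumber = (p : ℝ) / q) :
    ∃ y : ℤ → ℝ, StrictMono y ∧ (∀ n m : ℤ, y (n + (q : ℤ) * m) = y n + m) ∧
      (∀ n, (f : CircleDeg1Lift) (y n) = y (n + p)) := by
  set F : CircleDeg1Lift := (f : CircleDeg1Lift) with hFdef
  have hFcont : Continuous F :=
    (continuous_iff_surjective _).2 (isUnit_iff_bijective.1 f.isUnit).2
  have hFstrict : StrictMono F :=
    (strictMono_iff_injective _).2 (isUnit_iff_bijective.1 f.isUnit).1
  obtain ⟨x₀, hx₀⟩ := (translationNumber_eq_rat_iff _ hFcont hq).1 hf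
  have hcop : IsCoprime (p : ℤ) ((q : ℕ) : ℤ) := by
    rw [Int.isCoprime_iff_gcd_eq_one]
    simpa [Int.gcd] using hred
  have hqz : (0 : ℤ) < (q : ℤ) := by exact_mod_cast hq
  -- no smaller period
  have hdist : ∀ (z : ℝ) (d : ℕ), 0 < d → d < q → ∀ m : ℤ, (F ^ d) z ≠ z + m := by
    intro z d hd hdq m hEq
    have hτ : F.translationNumber = (m : ℝ) / d := translationNumber_of_map_pow_eq_add_int F hEq hd
    rw [hf] at hτ
    have hq0 : (q : ℝ) ≠ 0 := Nat.cast_ne_zero.2 hq.ne'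
    have hd0 : (d : ℝ) ≠ 0 := Nat.cast_ne_zero.2 hd.ne'
    have hpd : (p : ℝ) * d = m * q := by
      field_simp at hτ
      linarith [hτ]
    have hpdz : p * (d : ℤ) = m * (q : ℤ) := by exact_mod_cast hpd
    have hdvd : ((q : ℕ) : ℤ) ∣ p * (d : ℤ) := ⟨m, by rw [hpdz]; ring⟩
    have hdvd2 : ((q : ℕ) : ℤ) ∣ ((d : ℕ) : ℤ) := hcop.symm.dvd_of_dvd_mul_left hdvd
    have hqd : q ∣ d := by exact_mod_cast hdvd2
    exact absurd (Nat.le_of_dvd hd hqd) (not_le.2 hdq)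
  set pos : ℕ → ℝ := fun k => (F ^ k) x₀ - ⌊(F ^ k) x₀ - x₀⌋ with hposdef
  have hposmem : ∀ k, x₀ ≤ pos k ∧ pos k < x₀ + 1 := by
    intro k
    constructor
    · have := Int.floor_le ((F ^ k) x₀ - x₀)
      simp only [hposdef]
      linarith
    · have := Int.lt_floor_add_one ((F ^ k) x₀ - x₀)
      simp only [hposdef]
      push_cast
      linarith
  set S : Finset ℝ := (Finset.range q).image pos with hSdef
  have hSb : ∀ s ∈ S, x₀ ≤ s ∧ s < x₀ + 1 := by
    intro s hs
    rw [hSdef, Finset.mem_image] at hs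
    obtain ⟨k, _, rfl⟩ := hs
    exact hposmem k
  have hSpos : ∀ s ∈ S, ∃ k : ℕ, k < q ∧ ∃ m : ℤ, s = (F ^ k) x₀ + m := by
    intro s hs
    rw [hSdef, Finset.mem_image] at hs
    obtain ⟨k, hk, rfl⟩ := hs
    refine ⟨k, Finset.mem_range.1 hk, -⌊(F ^ k) x₀ - x₀⌋, ?_⟩
    simp only [hposdef]
    push_cast
    ring
  have hx₀S : x₀ ∈ S := by
    rw [hSdef, Finset.mem_image]
    exact ⟨0, Finset.mem_range.2 hq, by simp [hposdef]⟩
  have hinj : Set.InjOn pos (Finset.range q) := by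
    have key : ∀ a b : ℕ, a < b → b < q → pos a ≠ pos b := by
      intro a b hab hbq hpe
      have h1 : (F ^ (b - a)) ((F ^ a) x₀) = (F ^ b) x₀ := by
        rw [← CircleDeg1Lift.mul_apply, ← pow_add]
        congr 2
        omega
      have h2 : (F ^ (b - a)) ((F ^ a) x₀)
          = (F ^ a) x₀ + ((⌊(F ^ b) x₀ - x₀⌋ - ⌊(F ^ a) x₀ - x₀⌋ : ℤ) : ℝ) := by
        rw [h1]
        simp only [hposdef] at hpe
        push_cast
        linarith
      exact hdist _ (b - a) (by omega) (by omega) _ h2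
    intro a ha b hb hab
    simp only [Finset.coe_range, Set.mem_Iio] at ha hb
    rcases lt_trichotomy a b with h | h | h
    · exact absurd hab (key a b h hb)
    · exact h
    · exact absurd hab.symm (key b a h ha)
  have hScard : S.card = q := by
    rw [hSdef, Finset.card_image_of_injOn hinj, Finset.card_range]
  set e := S.orderIsoOfFin hScard with hedef
  have hmod : ∀ n : ℤ, (n % (q : ℤ)).toNat < q := by
    intro n
    have h1 : 0 ≤ n % (q : ℤ) := Int.emod_nonneg n hqz.ne'
    have h2 : n % (q : ℤ) < (q : ℤ) := Int.emod_lt_of_pos n hqz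
    omega
  set y : ℤ → ℝ := fun n => ((e ⟨(n % (q : ℤ)).toNat, hmod n⟩ : ℝ) + ((n / (q : ℤ) : ℤ) : ℝ))
    with hydef
  have heS : ∀ i : Fin q, ((e i : ℝ)) ∈ S := fun i => (e i).2
  have hymono : StrictMono y := by
    intro n n' hnn'
    have hd1 := Int.mul_ediv_add_emod n (q : ℤ)
    have hd2 := Int.mul_ediv_add_emod n' (q : ℤ)
    have hm1 : 0 ≤ n % (q : ℤ) := Int.emod_nonneg n hqz.ne'
    have hm2 : n % (q : ℤ) < (q : ℤ) := Int.emod_lt_of_pos n hqz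
    have hm3 : 0 ≤ n' % (q : ℤ) := Int.emod_nonneg n' hqz.ne'
    have hm4 : n' % (q : ℤ) < (q : ℤ) := Int.emod_lt_of_pos n' hqz
    have hdle : n / (q : ℤ) ≤ n' / (q : ℤ) := Int.ediv_le_ediv hqz hnn'.le
    rcases eq_or_lt_of_le hdle with hdeq | hdlt
    · have hdd : (q : ℤ) * (n / (q : ℤ)) = (q : ℤ) * (n' / (q : ℤ)) := by rw [hdeq]
      have hmlt : (n % (q : ℤ)).toNat < (n' % (q : ℤ)).toNat := by omega
      have helt : ((e ⟨(n % (q : ℤ)).toNat, hmod n⟩ : ℝ))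
          < ((e ⟨(n' % (q : ℤ)).toNat, hmod n'⟩ : ℝ)) := by
        have : (⟨(n % (q : ℤ)).toNat, hmod n⟩ : Fin q) < ⟨(n' % (q : ℤ)).toNat, hmod n'⟩ :=
          Fin.mk_lt_mk.2 hmlt
        exact_mod_cast e.lt_iff_lt.2 this
      simp only [hydef, hdeq]
      linarith
    · have hb1 := hSb _ (heS ⟨(n % (q : ℤ)).toNat, hmod n⟩)
      have hb2 := hSb _ (heS ⟨(n' % (q : ℤ)).toNat, hmod n'⟩)
      have hcast : ((n / (q : ℤ) : ℤ) : ℝ) + 1 ≤ ((n' / (q : ℤ) : ℤ) : ℝ) := by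
        exact_mod_cast (by omega : n / (q : ℤ) + 1 ≤ n' / (q : ℤ))
      simp only [hydef]
      linarith [hb1.1, hb1.2, hb2.1, hb2.2]
  have hyshift : ∀ n m : ℤ, y (n + (q : ℤ) * m) = y n + m := by
    intro n m
    have h1 : (n + (q : ℤ) * m) % (q : ℤ) = n % (q : ℤ) := by
      rw [Int.add_mul_emod_self_left]
    have h2 : (n + (q : ℤ) * m) / (q : ℤ) = n / (q : ℤ) + m :=
      Int.add_mul_ediv_left n m hqz.ne'
    simp only [hydef]
    have : (⟨((n + (q : ℤ) * m) % (q : ℤ)).toNat, hmod _⟩ : Fin q)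
        = ⟨(n % (q : ℤ)).toNat, hmod n⟩ := by
      apply Fin.ext
      simp [h1]
    rw [this, h2]
    push_cast
    ring
  -- membership of shifted S elements in the range of y
  have hSy : ∀ s ∈ S, ∀ m : ℤ, ∃ n : ℤ, y n = s + m := by
    intro s hs m
    obtain ⟨i, hi⟩ := e.surjective ⟨s, hs⟩
    refine ⟨(i : ℤ) + (q : ℤ) * m, ?_⟩
    rw [hyshift]
    have hiq : ((i : ℕ) : ℤ) % (q : ℤ) = (i : ℕ) := Int.emod_eq_of_lt (by positivity) (by exact_mod_cast i.2)
    have hid : ((i : ℕ) : ℤ) / (q : ℤ) = 0 := Int.ediv_eq_zero_of_lt (by positivity) (by exact_mod_cast i.2)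
    have h3 : y ((i : ℕ) : ℤ) = s := by
      simp only [hydef]
      have h4 : (⟨(((i : ℕ) : ℤ) % (q : ℤ)).toNat, hmod _⟩ : Fin q) = i := by
        apply Fin.ext
        simp [hiq]
      rw [h4, hid]
      have : ((e i : ℝ)) = s := by rw [hi]
      simp [this]
    rw [h3]
  have hyS : ∀ n : ℤ, ∃ s ∈ S, ∃ m : ℤ, y n = s + m := by
    intro n
    exact ⟨_, heS ⟨(n % (q : ℤ)).toNat, hmod n⟩, n / (q : ℤ), rfl⟩
  -- reach points of the orbit lattice
  have toY : ∀ (j : ℕ), j < q → ∀ (m : ℤ), ∃ n : ℤ, y n = (F ^ j) x₀ + m := by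
    intro j hj m
    have hposS : pos j ∈ S := by
      rw [hSdef, Finset.mem_image]
      exact ⟨j, Finset.mem_range.2 hj, rfl⟩
    obtain ⟨n, hn⟩ := hSy (pos j) hposS (⌊(F ^ j) x₀ - x₀⌋ + m)
    refine ⟨n, ?_⟩
    rw [hn]
    simp only [hposdef]
    push_cast
    ring
  -- F maps range of y into range of y
  have hFX : ∀ n : ℤ, ∃ n' : ℤ, F (y n) = y n' := by
    intro n
    obtain ⟨s, hs, m, hyn⟩ := hyS n
    obtain ⟨k, hk, m₂, hsk⟩ := hSpos s hs
    have h1 : F (y n) = (F ^ (k + 1)) x₀ + (m₂ + m) := by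
      rw [hyn, hsk, add_assoc]
      have : ((m₂ : ℝ)) + m = ((m₂ + m : ℤ) : ℝ) := by push_cast; ring
      rw [this, CircleDeg1Lift.map_add_int]
      congr 1
      rw [pow_succ', CircleDeg1Lift.mul_apply]
    by_cases hkq : k + 1 < q
    · obtain ⟨n', hn'⟩ := toY (k + 1) hkq (m₂ + m)
      exact ⟨n', by rw [h1, hn']; push_cast; ring⟩
    · have hkq' : k + 1 = q := by omega
      have h2 : (F ^ (k + 1)) x₀ = x₀ + p := by rw [hkq']; exact hx₀
      obtain ⟨n', hn'⟩ := hSy x₀ hx₀S (p + (m₂ + m))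
      refine ⟨n', ?_⟩
      rw [h1, h2, hn']
      push_cast
      ring
  -- F⁻¹ maps range of y into range of y
  have hFinvX : ∀ n : ℤ, ∃ n' : ℤ, ((f⁻¹ : CircleDeg1Liftˣ) : CircleDeg1Lift) (y n) = y n' := by
    intro n
    obtain ⟨s, hs, m, hyn⟩ := hyS n
    obtain ⟨k, hk, m₂, hsk⟩ := hSpos s hs
    set Fi : CircleDeg1Lift := ((f⁻¹ : CircleDeg1Liftˣ) : CircleDeg1Lift) with hFidef
    have h1 : Fi (y n) = Fi ((F ^ k) x₀) + (m₂ + m) := by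
      rw [hyn, hsk, add_assoc]
      have : ((m₂ : ℝ)) + m = ((m₂ + m : ℤ) : ℝ) := by push_cast; ring
      rw [this, CircleDeg1Lift.map_add_int]
    rcases Nat.eq_zero_or_pos k with hk0 | hk0
    · have h2 : Fi ((F ^ k) x₀) = (F ^ (q - 1)) x₀ - p := by
        subst hk0
        have h3 : (F ^ 0) x₀ = F ((F ^ (q - 1)) x₀) - p := by
          have h4 : F ((F ^ (q - 1)) x₀) = (F ^ q) x₀ := by
            rw [← CircleDeg1Lift.mul_apply, ← pow_succ']
            congr 2
            omega
          rw [h4, hx₀]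
          simp
        rw [h3]
        have : ((p : ℝ)) = ((p : ℤ) : ℝ) := rfl
        rw [CircleDeg1Lift.map_sub_int]
        congr 1
        rw [hFidef, hFdef]
        exact units_inv_apply_apply f _
      obtain ⟨n', hn'⟩ := toY (q - 1) (by omega) (-p + (m₂ + m))
      refine ⟨n', ?_⟩
      rw [h1, h2, hn']
      push_cast
      ring
    · have h2 : Fi ((F ^ k) x₀) = (F ^ (k - 1)) x₀ := by
        have h3 : (F ^ k) x₀ = F ((F ^ (k - 1)) x₀) := by
          rw [← CircleDeg1Lift.mul_apply, ← pow_succ']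
          congr 2
          omega
        rw [h3, hFidef, hFdef]
        exact units_inv_apply_apply f _
      obtain ⟨n', hn'⟩ := toY (k - 1) (by omega) (m₂ + m)
      exact ⟨n', by rw [h1, h2, hn']; push_cast; ring⟩
  -- the induced map on indices
  choose σ hσ using hFX
  have hyinj : Function.Injective y := hymono.injective
  have hσmono : StrictMono σ := by
    intro n n' h
    have h1 : F (y n) < F (y n') := hFstrict (hymono h)
    rw [hσ n, hσ n'] at h1
    exact hymono.lt_iff_lt.1 h1
  have hσsurj : Function.Surjective σ := by
    intro m
    obtain ⟨n', hn'⟩ := hFinvX m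
    refine ⟨n', hyinj ?_⟩
    rw [← hσ n', ← hn', hFdef]
    exact units_apply_inv_apply f _
  have hσ1 : ∀ n : ℤ, σ (n + 1) = σ n + 1 := by
    intro n
    have h1 : σ n < σ (n + 1) := hσmono (lt_add_one n)
    by_contra hne
    have h2 : σ n + 1 < σ (n + 1) := by omega
    obtain ⟨t, ht⟩ := hσsurj (σ n + 1)
    rcases le_or_gt t n with h | h
    · have := hσmono.monotone h
      omega
    · have : n + 1 ≤ t := h
      have := hσmono.monotone this
      omega
  have hσlin : ∀ n : ℤ, σ n = n + σ 0 := by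
    have h1 := rotz_shiftIter σ 1 (fun n => hσ1 n)
    intro n
    have h2 := h1 n 0
    simp at h2
    omega
  -- identify the shift with p
  have hstep : ∀ n : ℤ, F (y n) = y (n + σ 0) := by
    intro n
    rw [hσ n, hσlin n]
  have hpow : ∀ (j : ℕ) (n : ℤ), (F ^ j) (y n) = y (n + (j : ℤ) * σ 0) := by
    intro j
    induction j with
    | zero => simp
    | succ t ih =>
        intro n
        rw [pow_succ, CircleDeg1Lift.mul_apply, hstep n, ih (n + σ 0)]
        congr 1
        push_cast
        ring
  have hFq : (F ^ q) (y 0) = y 0 + p := by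
    obtain ⟨s, hs, m, hyn⟩ := hyS 0
    obtain ⟨k, hk, m₂, hsk⟩ := hSpos s hs
    have h1 : (F ^ q) (y 0) = (F ^ q) ((F ^ k) x₀) + (m₂ + m) := by
      rw [hyn, hsk, add_assoc]
      have : ((m₂ : ℝ)) + m = ((m₂ + m : ℤ) : ℝ) := by push_cast; ring
      rw [this, CircleDeg1Lift.map_add_int]
    have h2 : (F ^ q) ((F ^ k) x₀) = (F ^ k) x₀ + p := by
      rw [← CircleDeg1Lift.mul_apply, ← pow_add, add_comm, pow_add, CircleDeg1Lift.mul_apply, hx₀]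
      exact CircleDeg1Lift.map_add_int _ _ _
    rw [h1, h2, hyn, hsk]
    push_cast
    ring
  have hσ0 : σ 0 = p := by
    have h1 : (F ^ q) (y 0) = y (0 + (q : ℤ) * σ 0) := hpow q 0
    have h2 : y (0 + (q : ℤ) * p) = y 0 + p := by
      rw [hyshift]
    have h3 : y (0 + (q : ℤ) * σ 0) = y (0 + (q : ℤ) * p) := by
      rw [← h1, hFq, h2]
    have h4 := hyinj h3
    have h5 : (q : ℤ) * σ 0 = (q : ℤ) * p := by omega
    exact mul_left_cancel₀ hqz.ne' h5
  refine ⟨y, hymono, hyshift, fun n => ?_⟩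
  rw [hstep n, hσ0]

theorem rotZ_commutator_le (f g : CircleDeg1Liftˣ) (p p' : ℤ) (q : ℕ) (hq : 0 < q)
    (hred : Nat.Coprime p.natAbs q)
    (hf : rotZ f = (p : ℝ) / q) (hg : rotZ g = (p' : ℝ) / q) :
    rotZ (f * g * f⁻¹ * g⁻¹) ≤ 1 / q ∧
      (∀ x : ℝ, ((f : CircleDeg1Lift) ^ q) x = x + p →
        ((f * g * f⁻¹ * g⁻¹ : CircleDeg1Liftˣ) : CircleDeg1Lift) x < x →
        rotZ (f * g * f⁻¹ * g⁻¹) ≤ 0) := by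
  have hτ0 : ∀ x : ℝ, ((f * g * f⁻¹ * g⁻¹ : CircleDeg1Liftˣ) : CircleDeg1Lift) x ≤ x →
      rotZ (f * g * f⁻¹ * g⁻¹) ≤ 0 := by
    intro x hx
    unfold rotZ
    have := translationNumber_le_of_le_add_int
      ((f * g * f⁻¹ * g⁻¹ : CircleDeg1Liftˣ) : CircleDeg1Lift) (x := x) (m := 0)
      (by simpa using hx)
    simpa using this
  refine ⟨?_, fun x _ hx => hτ0 x hx.le⟩
  set F : CircleDeg1Lift := (f : CircleDeg1Lift) with hFdef
  set G : CircleDeg1Lift := (g : CircleDeg1Lift) with hGdef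
  set F' : CircleDeg1Lift := ((f⁻¹ : CircleDeg1Liftˣ) : CircleDeg1Lift) with hF'def
  set G' : CircleDeg1Lift := ((g⁻¹ : CircleDeg1Liftˣ) : CircleDeg1Lift) with hG'def
  set H : CircleDeg1Lift := ((f * g * f⁻¹ * g⁻¹ : CircleDeg1Liftˣ) : CircleDeg1Lift) with hHdef
  have hqR : (0 : ℝ) < (q : ℝ) := by exact_mod_cast hq
  have hHapp : ∀ z : ℝ, H z = F (G (F' (G' z))) := by
    intro z
    rw [hHdef, hFdef, hGdef, hF'def, hG'def]
    simp [Units.val_mul, CircleDeg1Lift.mul_apply]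
  by_cases hcase : ∀ z : ℝ, z < H z
  swap
  · push_neg at hcase
    obtain ⟨z, hz⟩ := hcase
    exact le_trans (hτ0 z hz) (by positivity)
  · have hcop : IsCoprime (p : ℤ) ((q : ℕ) : ℤ) := by
      rw [Int.isCoprime_iff_gcd_eq_one]
      simpa [Int.gcd] using hred
    have hfg : ∀ v : ℝ, G (F v) < F (G v) := by
      intro v
      have h1 := hcase (G (F v))
      have h2 : H (G (F v)) = F (G v) := by
        rw [hHapp]
        rw [hG'def, hGdef, units_inv_apply_apply g (F v)]
        rw [hF'def, hFdef, units_inv_apply_apply f v]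
      rwa [h2] at h1
    obtain ⟨y, hymono, hyshift, hyF⟩ := rotz_exists_enum f p q hq hred hf
    have hy1 : ∀ n : ℤ, y (n + (q : ℤ)) = y n + 1 := by
      intro n
      have := hyshift n 1
      simpa using this
    have hyFinv : ∀ n : ℤ, F' (y n) = y (n - p) := by
      intro n
      have h1 : F (y (n - p)) = y n := by rw [hyF]; congr 1; ring
      rw [← h1, hF'def, hFdef, units_inv_apply_apply f _]
    -- greatest index below G (y n)
    have hΦex : ∀ n : ℤ, ∃ m : ℤ, (y m ≤ G (y n)) ∧ ∀ m' : ℤ, y m' ≤ G (y n) → m' ≤ m := by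
      intro n
      have Hinh : ∃ z : ℤ, y z ≤ G (y n) := by
        refine ⟨0 + (q : ℤ) * ⌊G (y n) - y 0⌋, ?_⟩
        rw [hyshift]
        have := Int.floor_le (G (y n) - y 0)
        linarith
      have Hbdd : ∃ b : ℤ, ∀ z : ℤ, y z ≤ G (y n) → z ≤ b := by
        refine ⟨0 + (q : ℤ) * (⌈G (y n) - y 0⌉ + 1), fun z hz => ?_⟩
        have h1 : G (y n) < y (0 + (q : ℤ) * (⌈G (y n) - y 0⌉ + 1)) := by
          rw [hyshift]
          have := Int.le_ceil (G (y n) - y 0)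
          push_cast
          linarith
        have := lt_of_le_of_lt hz h1
        exact (hymono.lt_iff_lt.1 this).le
      obtain ⟨m, hm1, hm2⟩ := Int.exists_greatest_of_bdd Hbdd Hinh
      exact ⟨m, hm1, hm2⟩
    choose Φ hΦ1 hΦ2 using hΦex
    have hΦ3 : ∀ n : ℤ, G (y n) < y (Φ n + 1) := by
      intro n
      by_contra hle
      push_neg at hle
      have := hΦ2 n _ hle
      omega
    have hΦq : ∀ n : ℤ, Φ (n + (q : ℤ)) = Φ n + (q : ℤ) := by
      intro n
      have hGq : G (y (n + (q : ℤ))) = G (y n) + 1 := by rw [hy1, CircleDeg1Lift.map_add_one]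
      have e1 : y (Φ n + (q : ℤ)) ≤ G (y (n + (q : ℤ))) := by
        rw [hy1, hGq]
        have := hΦ1 n
        linarith
      have e2 : Φ (n + (q : ℤ)) ≤ Φ n + (q : ℤ) := by
        have h1 := hΦ1 (n + (q : ℤ))
        rw [hGq] at h1
        have h2 : y (Φ (n + (q : ℤ)) - (q : ℤ)) = y (Φ (n + (q : ℤ))) - 1 := by
          have := hy1 (Φ (n + (q : ℤ)) - (q : ℤ))
          have h3 : Φ (n + (q : ℤ)) - (q : ℤ) + (q : ℤ) = Φ (n + (q : ℤ)) := by ring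
          rw [h3] at this
          linarith
        have h4 : y (Φ (n + (q : ℤ)) - (q : ℤ)) ≤ G (y n) := by rw [h2]; linarith
        have := hΦ2 n _ h4
        omega
      exact le_antisymm e2 (hΦ2 (n + (q : ℤ)) _ e1)
    have hΦp : ∀ n : ℤ, Φ (n + p) ≤ Φ n + p := by
      intro n
      have e1 : G (y (n + p)) < y (Φ n + 1 + p) := by
        rw [← hyF n]
        calc G (F (y n)) < F (G (y n)) := hfg _
          _ ≤ F (y (Φ n + 1)) := F.mono (hΦ3 n).le
          _ = y (Φ n + 1 + p) := hyF _
      have hlt : y (Φ (n + p)) < y (Φ n + 1 + p) := lt_of_le_of_lt (hΦ1 (n + p)) e1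
      have := hymono.lt_iff_lt.1 hlt
      omega
    have hΦeq : ∀ n : ℤ, Φ n = n + Φ 0 := rotz_phiEq Φ p q hq hcop hΦq hΦp
    set c : ℤ := Φ 0 with hcdef
    have hkey : ∀ n : ℤ, H (y n) ≤ y (n + 1) := by
      intro n
      have a1 : y n ≤ G (y (n - c)) := by
        have h1 := hΦ1 (n - c)
        have h2 : Φ (n - c) = n := by rw [hΦeq]; ring
        rwa [h2] at h1
      have a2 : G' (y n) ≤ y (n - c) := by
        have h1 := G'.mono a1
        have h2 : G' (G (y (n - c))) = y (n - c) := by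
          rw [hG'def, hGdef]; exact units_inv_apply_apply g _
        rwa [h2] at h1
      have a3 : F' (G' (y n)) ≤ y (n - c - p) := by
        have h1 := F'.mono a2
        rwa [hyFinv (n - c)] at h1
      have a4 : G (F' (G' (y n))) < y (n - p + 1) := by
        have h1 : Φ (n - c - p) + 1 = n - p + 1 := by rw [hΦeq]; ring
        calc G (F' (G' (y n))) ≤ G (y (n - c - p)) := G.mono a3
          _ < y (Φ (n - c - p) + 1) := hΦ3 _
          _ = y (n - p + 1) := by rw [h1]
      rw [hHapp]
      calc F (G (F' (G' (y n)))) ≤ F (y (n - p + 1)) := F.mono a4.le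
        _ = y (n - p + 1 + p) := hyF _
        _ = y (n + 1) := by congr 1; ring
    have hchain : ∀ j : ℕ, (H ^ j) (y 0) ≤ y (j : ℤ) := by
      intro j
      induction j with
      | zero => simp
      | succ t ih =>
          have h1 : (H ^ (t + 1)) (y 0) = H ((H ^ t) (y 0)) := by
            rw [pow_succ', CircleDeg1Lift.mul_apply]
          rw [h1]
          calc H ((H ^ t) (y 0)) ≤ H (y (t : ℤ)) := H.mono ih
            _ ≤ y ((t : ℤ) + 1) := hkey _
            _ = y ((t + 1 : ℕ) : ℤ) := by norm_cast
    have hq1 : (H ^ q) (y 0) ≤ y 0 + 1 := by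
      have h1 := hchain q
      have h2 : y ((q : ℕ) : ℤ) = y 0 + 1 := by
        have := hy1 0
        simpa using this
      linarith
    have hτq : (H ^ q).translationNumber ≤ 1 := by
      have := translationNumber_le_of_le_add_int (H ^ q) (x := y 0) (m := 1)
        (by exact_mod_cast hq1)
      simpa using this
    rw [translationNumber_pow] at hτq
    unfold rotZ
    rw [← hHdef]
    rw [le_div_iff₀ hqR]
    linarith [hτq]
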